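/- If f is a holomorphic modular form of weight k on SL(2,ℤ) with D(f) = 0, where D = θ - (k/12)E₂ is the Serre derivation (θ = q d/dq), then f is a scalar multiple of η(τ)^{2k}, and necessarily such nonzero f exist only for k ≥ 0 with the property that η^{2k} is holomorphic of weight k. -/

import Mathlib

open Complex

noncomputable section

/-- The Dedekind eta function `η(z) = q^{1/24} ∏_{n≥1} (1 - qⁿ)`, `q = e^{2πiz}`. -/
def dedekindEta (z : ℂ) : ℂ :=
  Complex.exp (Real.pi * I * z / 12) *
    ∏' n : ℕ, (1 - Complex.exp (2 * Real.pi * I * (n + 1) * z))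

/-- The quasimodular Eisenstein series `E₂(z) = 1 - 24 Σ_{n≥1} σ₁(n) qⁿ`. -/
def E₂ (z : ℂ) : ℂ :=
  1 - 24 * ∑' n : ℕ, ((ArithmeticFunction.sigma 1) (n + 1) : ℂ) *
    Complex.exp (2 * Real.pi * I * (n + 1) * z)

private lemma norm_Q (z : ℂ) :
    ‖Complex.exp (2 * Real.pi * I * z)‖ = Real.exp (-(2 * Real.pi * z.im)) := by
  rw [Complex.norm_exp]
  congr 1
  simp [Complex.mul_re, Complex.mul_im]

private lemma norm_qexp (n : ℕ) (z : ℂ) :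
    ‖Complex.exp (2 * Real.pi * I * (n + 1) * z)‖ = Real.exp (-(2 * Real.pi * z.im)) ^ (n + 1) := by
  rw [← Real.exp_nat_mul, Complex.norm_exp]
  congr 1
  simp [Complex.mul_re, Complex.mul_im]
  ring

private lemma qexp_pow (n : ℕ) (z : ℂ) :
    Complex.exp (2 * Real.pi * I * (n + 1) * z) = Complex.exp (2 * Real.pi * I * z) ^ (n + 1) := by
  rw [← Complex.exp_nat_mul]
  congr 1
  push_cast
  ring

private lemma sig_eq {m m' : ℕ} (h : m = m') {d d' : ℕ} (hd : d ∈ Nat.divisors (m + 1))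
    (hd' : d' ∈ Nat.divisors (m' + 1)) (h2 : d = d') :
    (⟨m, ⟨d, hd⟩⟩ : Σ m : ℕ, {d : ℕ // d ∈ Nat.divisors (m + 1)}) = ⟨m', ⟨d', hd'⟩⟩ := by
  subst h; subst h2; rfl

private def divEquiv : ℕ × ℕ ≃ Σ m : ℕ, {d : ℕ // d ∈ Nat.divisors (m + 1)} where
  toFun p :=
    ⟨(p.1 + 1) * (p.2 + 1) - 1, ⟨p.1 + 1, by
      rw [Nat.sub_add_cancel (Nat.one_le_iff_ne_zero.mpr (by positivity)), Nat.mem_divisors]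
      exact ⟨dvd_mul_right _ _, by positivity⟩⟩⟩
  invFun s := (s.2.1 - 1, (s.1 + 1) / s.2.1 - 1)
  left_inv p := by
    obtain ⟨n, j⟩ := p
    simp only [Nat.sub_add_cancel (Nat.one_le_iff_ne_zero.mpr
      (show (n + 1) * (j + 1) ≠ 0 by positivity))]
    rw [Nat.mul_div_cancel_left _ (show 0 < n + 1 by omega)]
    simp
  right_inv := fun ⟨m, d, hd⟩ => by
    obtain ⟨hdvd, -⟩ := Nat.mem_divisors.mp hd
    have hd0 : 0 < d := Nat.pos_of_mem_divisors hd
    have hq0 : 0 < (m + 1) / d := Nat.div_pos (Nat.le_of_dvd m.succ_pos hdvd) hd0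
    have h1 : d - 1 + 1 = d := Nat.sub_add_cancel hd0
    have hm : (d - 1 + 1) * ((m + 1) / d - 1 + 1) - 1 = m := by
      rw [h1, Nat.sub_add_cancel hq0, Nat.mul_div_cancel' hdvd]
      simp
    exact sig_eq hm _ _ h1

set_option maxHeartbeats 1000000 in
private lemma lambert {w : ℂ} (hw : ‖w‖ < 1) :
    ∑' n : ℕ, (((n : ℂ) + 1) * w ^ (n + 1) / (1 - w ^ (n + 1))) =
      ∑' n : ℕ, ((ArithmeticFunction.sigma 1) (n + 1) : ℂ) * w ^ (n + 1) := by
  have h0 : (0 : ℝ) ≤ ‖w‖ := norm_nonneg w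
  set F : ℕ × ℕ → ℂ := fun p => ((p.1 : ℂ) + 1) * w ^ ((p.1 + 1) * (p.2 + 1)) with hF
  have hgeo : Summable (fun n : ℕ => ‖w‖ ^ n) := summable_geometric_of_lt_one h0 hw
  have hshift : Summable (fun n : ℕ => ((n : ℝ) + 1) * ‖w‖ ^ (n + 1)) := by
    have h1 : Summable (fun n : ℕ => (n : ℝ) ^ 1 * ‖w‖ ^ n) :=
      summable_pow_mul_geometric_of_norm_lt_one 1 (by rwa [Real.norm_of_nonneg h0])
    have h2 := (summable_nat_add_iff 1).mpr h1
    exact h2.congr fun n => by push_cast; ring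
  have hFs : Summable F := by
    have hb : Summable (fun p : ℕ × ℕ => (((p.1 : ℝ) + 1) * ‖w‖ ^ (p.1 + 1)) * ‖w‖ ^ p.2) :=
      Summable.mul_of_nonneg hshift hgeo (fun n => by positivity) (fun n => by positivity)
    apply Summable.of_norm_bounded hb
    intro p
    have hnorm : ‖F p‖ = ((p.1 : ℝ) + 1) * ‖w‖ ^ ((p.1 + 1) * (p.2 + 1)) := by
      rw [hF]
      simp only [norm_mul, norm_pow]
      congr 1
      have : ((p.1 : ℂ) + 1) = ((p.1 + 1 : ℕ) : ℂ) := by push_cast; ring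
      rw [this, Complex.norm_natCast]
      push_cast; ring
    rw [hnorm, mul_assoc, ← pow_add]
    have hle : ‖w‖ ^ ((p.1 + 1) * (p.2 + 1)) ≤ ‖w‖ ^ (p.1 + 1 + p.2) :=
      pow_le_pow_of_le_one h0 hw.le (by nlinarith)
    nlinarith [pow_nonneg h0 ((p.1 + 1) * (p.2 + 1)), pow_nonneg h0 (p.1 + 1 + p.2)]
  have hterm : ∀ n : ℕ, ∑' j : ℕ, F (n, j) = ((n : ℂ) + 1) * w ^ (n + 1) / (1 - w ^ (n + 1)) := by
    intro n
    have hv : ‖w ^ (n + 1)‖ < 1 := by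
      rw [norm_pow]; exact pow_lt_one₀ h0 hw (Nat.succ_ne_zero n)
    have e1 : ∀ j : ℕ, F (n, j) = (((n : ℂ) + 1) * w ^ (n + 1)) * (w ^ (n + 1)) ^ j := by
      intro j
      rw [hF]
      simp only
      rw [pow_mul, pow_succ' (w ^ (n + 1)) j]
      ring
    calc ∑' j : ℕ, F (n, j) = ∑' j : ℕ, (((n : ℂ) + 1) * w ^ (n + 1)) * (w ^ (n + 1)) ^ j :=
          tsum_congr e1
      _ = (((n : ℂ) + 1) * w ^ (n + 1)) * (1 - w ^ (n + 1))⁻¹ := by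
          rw [tsum_mul_left, tsum_geometric_of_norm_lt_one hv]
      _ = ((n : ℂ) + 1) * w ^ (n + 1) / (1 - w ^ (n + 1)) := by
          rw [div_eq_mul_inv]
  set G : (Σ m : ℕ, {d : ℕ // d ∈ Nat.divisors (m + 1)}) → ℂ :=
    fun s => ((s.2.1 : ℂ)) * w ^ (s.1 + 1) with hG
  have hFG : ∀ p : ℕ × ℕ, G (divEquiv p) = F p := by
    intro p
    rw [hF, hG]
    simp only [divEquiv, Equiv.coe_fn_mk]
    rw [Nat.sub_add_cancel (Nat.one_le_iff_ne_zero.mpr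
      (show (p.1 + 1) * (p.2 + 1) ≠ 0 by positivity))]
    push_cast; ring
  have hGs : Summable G := divEquiv.summable_iff.mp (hFs.congr fun p => (hFG p).symm)
  have hinner : ∀ m : ℕ, (∑' d : {d : ℕ // d ∈ Nat.divisors (m + 1)}, G ⟨m, d⟩) =
      ((ArithmeticFunction.sigma 1) (m + 1) : ℂ) * w ^ (m + 1) := by
    intro m
    rw [hG]
    simp only
    rw [Finset.tsum_subtype (Nat.divisors (m + 1)) (fun d => ((d : ℂ)) * w ^ (m + 1)),
      ← Finset.sum_mul, ArithmeticFunction.sigma_one_apply]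
    push_cast
    ring
  calc ∑' n : ℕ, (((n : ℂ) + 1) * w ^ (n + 1) / (1 - w ^ (n + 1)))
      = ∑' n : ℕ, ∑' j : ℕ, F (n, j) := by exact tsum_congr fun n => (hterm n).symm
    _ = ∑' p : ℕ × ℕ, F p := (Summable.tsum_prod' hFs fun b => hFs.prod_factor b).symm
    _ = ∑' s : Σ m : ℕ, {d : ℕ // d ∈ Nat.divisors (m + 1)}, G s := by
        rw [← divEquiv.tsum_eq G]; exact tsum_congr fun p => (hFG p).symm
    _ = ∑' m : ℕ, ∑' d : {d : ℕ // d ∈ Nat.divisors (m + 1)}, G ⟨m, d⟩ := Summable.tsum_sigma hGs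
    _ = ∑' n : ℕ, ((ArithmeticFunction.sigma 1) (n + 1) : ℂ) * w ^ (n + 1) :=
        tsum_congr hinner

private lemma rlt1 {z : ℂ} (hz : 0 < z.im) : Real.exp (-(2 * Real.pi * z.im)) < 1 :=
  Real.exp_lt_one_iff.mpr (by nlinarith [Real.pi_pos])

private lemma summable_log (z : ℂ) (hz : 0 < z.im) :
    Summable fun n : ℕ => Complex.log (1 - Complex.exp (2 * Real.pi * I * (n + 1) * z)) := by
  set r := Real.exp (-(2 * Real.pi * z.im)) with hr
  have hr0 : 0 < r := Real.exp_pos _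
  have hr1 : r < 1 := rlt1 hz
  have hsum : Summable fun n : ℕ => (3 / 2 : ℝ) * r ^ (n + 1) :=
    (((summable_nat_add_iff 1).mpr (summable_geometric_of_lt_one hr0.le hr1)).mul_left _)
  apply Summable.of_norm_bounded_eventually_nat hsum
  obtain ⟨N, hN⟩ := exists_pow_lt_of_lt_one (show (0:ℝ) < 1/2 by norm_num) hr1
  filter_upwards [Filter.eventually_ge_atTop N] with n hn
  have hle : r ^ (n + 1) ≤ r ^ N := pow_le_pow_of_le_one hr0.le hr1.le (by omega)
  have hq : ‖-(Complex.exp (2 * Real.pi * I * (n + 1) * z))‖ ≤ 1 / 2 := by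
    rw [norm_neg, norm_qexp]
    linarith
  have := Complex.norm_log_one_add_half_le_self hq
  rw [norm_neg, norm_qexp] at this
  calc ‖Complex.log (1 - Complex.exp (2 * Real.pi * I * (n + 1) * z))‖
      = ‖Complex.log (1 + -(Complex.exp (2 * Real.pi * I * (n + 1) * z)))‖ := by
        rw [sub_eq_add_neg]
    _ ≤ 3 / 2 * r ^ (n + 1) := this

private lemma one_sub_qexp_ne_zero (n : ℕ) {z : ℂ} (hz : 0 < z.im) :
    1 - Complex.exp (2 * Real.pi * I * (n + 1) * z) ≠ 0 := by
  intro h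
  have h1 : (1 : ℂ) = Complex.exp (2 * Real.pi * I * (n + 1) * z) := sub_eq_zero.mp h
  have h2 := congrArg norm h1
  rw [norm_one, norm_qexp] at h2
  have : Real.exp (-(2 * Real.pi * z.im)) ^ (n + 1) < 1 :=
    pow_lt_one₀ (Real.exp_pos _).le (rlt1 hz) (Nat.succ_ne_zero n)
  linarith [h2 ▸ this]

private lemma etaProd_eq (z : ℂ) (hz : 0 < z.im) :
    (∏' n : ℕ, (1 - Complex.exp (2 * Real.pi * I * (n + 1) * z))) =
      Complex.exp (∑' n : ℕ, Complex.log (1 - Complex.exp (2 * Real.pi * I * (n + 1) * z))) := by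
  exact (Complex.cexp_tsum_eq_tprod (fun n => one_sub_qexp_ne_zero n hz) (summable_log z hz)).symm

private lemma eta_ne_zero {z : ℂ} (hz : 0 < z.im) : dedekindEta z ≠ 0 := by
  rw [dedekindEta, etaProd_eq z hz]
  exact mul_ne_zero (Complex.exp_ne_zero _) (Complex.exp_ne_zero _)

set_option maxHeartbeats 1000000 in
private lemma hasDerivAt_logSum (z : ℂ) (hz : 0 < z.im) :
    HasDerivAt (fun w : ℂ => ∑' n : ℕ, Complex.log (1 - Complex.exp (2 * Real.pi * I * (n + 1) * w)))
      (∑' n : ℕ, (-(Complex.exp (2 * Real.pi * I * (n + 1) * z) * (2 * Real.pi * I * ((n : ℂ) + 1))) /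
        (1 - Complex.exp (2 * Real.pi * I * (n + 1) * z)))) z := by
  set a : ℝ := z.im / 2 with ha
  have ha0 : 0 < a := half_pos hz
  set s : ℝ := Real.exp (-(2 * Real.pi * a)) with hs
  have hs0 : 0 < s := Real.exp_pos _
  have hs1 : s < 1 := Real.exp_lt_one_iff.mpr (by nlinarith [Real.pi_pos])
  have hto : IsOpen {w : ℂ | a < w.im} := isOpen_lt continuous_const Complex.continuous_im
  have htc : IsPreconnected {w : ℂ | a < w.im} := (convex_halfSpace_im_gt a).isPreconnected
  have hzt : z ∈ {w : ℂ | a < w.im} := by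
    simp only [Set.mem_setOf_eq, ha]; linarith
  have hu : Summable (fun n : ℕ => 2 * Real.pi * ((n : ℝ) + 1) * s ^ (n + 1) / (1 - s)) := by
    have h1 : Summable (fun n : ℕ => (n : ℝ) ^ 1 * s ^ n) :=
      summable_pow_mul_geometric_of_norm_lt_one 1 (by rwa [Real.norm_of_nonneg hs0.le])
    have h2 := (summable_nat_add_iff 1).mpr h1
    exact ((h2.mul_left (2 * Real.pi)).div_const (1 - s)).congr fun n => by push_cast; ring
  apply hasDerivAt_tsum_of_isPreconnected hu hto htc ?_ ?_ hzt (summable_log z hz) hzt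
  · intro n w hw
    have hw0 : 0 < w.im := lt_trans ha0 hw
    have h1 : HasDerivAt (fun y : ℂ => 2 * Real.pi * I * ((n : ℂ) + 1) * y)
        (2 * Real.pi * I * ((n : ℂ) + 1)) w := by
      simpa using (hasDerivAt_id w).const_mul (2 * Real.pi * I * ((n : ℂ) + 1) : ℂ)
    have h2 := (h1.cexp.const_sub 1).clog ?_
    · exact h2
    · rw [Complex.mem_slitPlane_iff]
      left
      have hq : ‖Complex.exp (2 * Real.pi * I * (n + 1) * w)‖ < 1 :=
        (norm_qexp n w) ▸ pow_lt_one₀ (Real.exp_pos _).le (rlt1 hw0) (Nat.succ_ne_zero n)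
      have hre : (Complex.exp (2 * Real.pi * I * (n + 1) * w)).re ≤
          ‖Complex.exp (2 * Real.pi * I * (n + 1) * w)‖ := Complex.re_le_norm _
      simp only [Complex.sub_re, Complex.one_re]
      linarith
  · intro n w hw
    have hw0 : 0 < w.im := lt_trans ha0 hw
    have hrw : Real.exp (-(2 * Real.pi * w.im)) ≤ s := by
      rw [hs]
      apply Real.exp_le_exp.mpr
      nlinarith [Real.pi_pos, (show a < w.im from hw)]
    have hqw : ‖Complex.exp (2 * Real.pi * I * (n + 1) * w)‖ ≤ s ^ (n + 1) := by
      rw [norm_qexp]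
      exact pow_le_pow_left₀ (Real.exp_pos _).le hrw _
    have hden : 1 - s ≤ ‖1 - Complex.exp (2 * Real.pi * I * (n + 1) * w)‖ := by
      have h1 : ‖(1 : ℂ)‖ - ‖Complex.exp (2 * Real.pi * I * (n + 1) * w)‖ ≤
          ‖1 - Complex.exp (2 * Real.pi * I * (n + 1) * w)‖ := norm_sub_norm_le _ _
      rw [norm_one] at h1
      have h2 : s ^ (n + 1) ≤ s := by
        calc s ^ (n + 1) ≤ s ^ 1 := pow_le_pow_of_le_one hs0.le hs1.le (by omega)
          _ = s := pow_one s
      linarith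
    have hc : ‖(2 * Real.pi * I * ((n : ℂ) + 1))‖ = 2 * Real.pi * ((n : ℝ) + 1) := by
      have : (2 * Real.pi * I * ((n : ℂ) + 1)) = ((2 * Real.pi * ((n : ℝ) + 1) : ℝ) : ℂ) * I := by
        push_cast; ring
      rw [this, norm_mul, Complex.norm_I, mul_one, Complex.norm_real, Real.norm_of_nonneg
        (by positivity)]
    rw [norm_div, norm_neg, norm_mul, hc]
    apply div_le_div₀ (by positivity) ?_ (by linarith) hden
    calc ‖Complex.exp (2 * Real.pi * I * (n + 1) * w)‖ * (2 * Real.pi * ((n : ℝ) + 1))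
        ≤ s ^ (n + 1) * (2 * Real.pi * ((n : ℝ) + 1)) := by
          apply mul_le_mul_of_nonneg_right hqw (by positivity)
      _ = 2 * Real.pi * ((n : ℝ) + 1) * s ^ (n + 1) := by ring

set_option maxHeartbeats 1000000 in
private lemma hasDerivAt_eta {z : ℂ} (hz : 0 < z.im) :
    HasDerivAt dedekindEta (Real.pi * I / 12 * E₂ z * dedekindEta z) z := by
  have hL := hasDerivAt_logSum z hz
  set T : ℂ := ∑' n : ℕ,
      (-(Complex.exp (2 * Real.pi * I * (n + 1) * z) * (2 * Real.pi * I * ((n : ℂ) + 1))) /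
        (1 - Complex.exp (2 * Real.pi * I * (n + 1) * z))) with hT
  set L : ℂ := ∑' n : ℕ, Complex.log (1 - Complex.exp (2 * Real.pi * I * (n + 1) * z)) with hLd
  have hP : HasDerivAt (fun w : ℂ => ∏' n : ℕ, (1 - Complex.exp (2 * Real.pi * I * (n + 1) * w)))
      (Complex.exp L * T) z := by
    apply HasDerivAt.congr_of_eventuallyEq hL.cexp
    filter_upwards [(isOpen_lt continuous_const Complex.continuous_im).mem_nhds hz] with w hw
    exact etaProd_eq w hw
  have hE : HasDerivAt (fun w : ℂ => Complex.exp (Real.pi * I * w / 12))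
      (Real.pi * I / 12 * Complex.exp (Real.pi * I * z / 12)) z := by
    have h1 : HasDerivAt (fun w : ℂ => Real.pi * I * w / 12) (Real.pi * I / 12) z := by
      simpa using ((hasDerivAt_id z).const_mul ((Real.pi : ℂ) * I)).div_const 12
    have h2 := h1.cexp
    refine h2.congr_deriv (Eq.symm ?_)
    ring
  have hmul := hE.mul hP
  refine hmul.congr_deriv (Eq.symm ?_)
  -- value identity
  have hQ : ‖Complex.exp (2 * Real.pi * I * z)‖ < 1 := by rw [norm_Q]; exact rlt1 hz
  have hTval : T = -(2 * Real.pi * I) *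
      ∑' n : ℕ, ((ArithmeticFunction.sigma 1) (n + 1) : ℂ) *
        Complex.exp (2 * Real.pi * I * (n + 1) * z) := by
    rw [hT]
    calc (∑' n : ℕ,
        (-(Complex.exp (2 * Real.pi * I * (n + 1) * z) * (2 * Real.pi * I * ((n : ℂ) + 1))) /
          (1 - Complex.exp (2 * Real.pi * I * (n + 1) * z))))
        = ∑' n : ℕ, -(2 * Real.pi * I) *
            (((n : ℂ) + 1) * Complex.exp (2 * Real.pi * I * z) ^ (n + 1) /
              (1 - Complex.exp (2 * Real.pi * I * z) ^ (n + 1))) := by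
          refine tsum_congr fun n => ?_
          rw [← qexp_pow]
          ring
      _ = -(2 * Real.pi * I) * ∑' n : ℕ,
            (((n : ℂ) + 1) * Complex.exp (2 * Real.pi * I * z) ^ (n + 1) /
              (1 - Complex.exp (2 * Real.pi * I * z) ^ (n + 1))) := tsum_mul_left
      _ = -(2 * Real.pi * I) * ∑' n : ℕ, ((ArithmeticFunction.sigma 1) (n + 1) : ℂ) *
            Complex.exp (2 * Real.pi * I * z) ^ (n + 1) := by rw [lambert hQ]
      _ = -(2 * Real.pi * I) * ∑' n : ℕ, ((ArithmeticFunction.sigma 1) (n + 1) : ℂ) *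
            Complex.exp (2 * Real.pi * I * (n + 1) * z) := by
          congr 1
          exact tsum_congr fun n => by rw [qexp_pow]
  have hPL : (∏' n : ℕ, (1 - Complex.exp (2 * Real.pi * I * (n + 1) * z))) = Complex.exp L :=
    etaProd_eq z hz
  simp only [dedekindEta, E₂]
  rw [hTval, hPL]
  ring

/-- `f` is a holomorphic modular form of weight `k` on `SL(2,ℤ)`, realized as a function
on the upper half-plane `{z : 0 < im z}`: holomorphic, weight-`k` invariant, and bounded
as `im z → ∞`. -/
def IsModularFormWt (k : ℕ) (f : ℂ → ℂ) : Prop :=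
  DifferentiableOn ℂ f {z : ℂ | 0 < z.im} ∧
  (∀ γ : Matrix.SpecialLinearGroup (Fin 2) ℤ, ∀ z : ℂ, 0 < z.im →
    f ((((γ : Matrix (Fin 2) (Fin 2) ℤ) 0 0 : ℂ) * z + ((γ : Matrix (Fin 2) (Fin 2) ℤ) 0 1 : ℂ)) /
        (((γ : Matrix (Fin 2) (Fin 2) ℤ) 1 0 : ℂ) * z + ((γ : Matrix (Fin 2) (Fin 2) ℤ) 1 1 : ℂ)))
      = (((γ : Matrix (Fin 2) (Fin 2) ℤ) 1 0 : ℂ) * z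
          + ((γ : Matrix (Fin 2) (Fin 2) ℤ) 1 1 : ℂ)) ^ k * f z) ∧
  (∃ C A : ℝ, ∀ z : ℂ, A < z.im → ‖f z‖ ≤ C)

set_option maxHeartbeats 1000000 in
/-- If `f` is a holomorphic modular form of weight `k` on `SL(2,ℤ)` annihilated by the
Serre derivation `D = θ - (k/12)E₂` (with `θ = q d/dq = (2πi)⁻¹ d/dz`), then `f` is a
scalar multiple of `η^{2k}`. -/
theorem serre_derivation_kernel_is_eta_power (k : ℕ) (f : ℂ → ℂ)
    (hf : IsModularFormWt k f)
    (hD : ∀ z : ℂ, 0 < z.im →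
      (2 * Real.pi * I)⁻¹ * deriv f z - ((k : ℂ) / 12) * E₂ z * f z = 0) :
    ∃ c : ℂ, ∀ z : ℂ, 0 < z.im → f z = c * (dedekindEta z) ^ (2 * k) := by
  obtain ⟨hdiff, -, -⟩ := hf
  have hU : IsOpen {w : ℂ | 0 < w.im} := isOpen_lt continuous_const Complex.continuous_im
  set h : ℂ → ℂ := fun w => f w / dedekindEta w ^ (2 * k) with hh
  have key : ∀ w ∈ {w : ℂ | 0 < w.im}, HasDerivAt h 0 w := by
    intro w hw
    have hw' : 0 < w.im := hw
    have hfd : HasDerivAt f (deriv f w) w :=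
      (hdiff.differentiableAt (hU.mem_nhds hw)).hasDerivAt
    have hne : (2 * (Real.pi : ℂ) * I) ≠ 0 :=
      mul_ne_zero (mul_ne_zero two_ne_zero (Complex.ofReal_ne_zero.mpr Real.pi_ne_zero))
        Complex.I_ne_zero
    have h2 : (2 * (Real.pi : ℂ) * I)⁻¹ * deriv f w = ((k : ℂ) / 12) * E₂ w * f w :=
      sub_eq_zero.mp (hD w hw')
    have hderiv : deriv f w = 2 * Real.pi * I * ((k : ℂ) / 12) * E₂ w * f w := by
      have h3 : deriv f w = 2 * Real.pi * I * ((2 * (Real.pi : ℂ) * I)⁻¹ * deriv f w) := by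
        rw [← mul_assoc, mul_inv_cancel₀ hne, one_mul]
      rw [h3, h2]
      ring
    have heta := hasDerivAt_eta hw'
    have hgd : HasDerivAt (fun w : ℂ => dedekindEta w ^ (2 * k))
        (2 * Real.pi * I * ((k : ℂ) / 12) * E₂ w * dedekindEta w ^ (2 * k)) w := by
      have hp := heta.fun_pow (2 * k)
      refine hp.congr_deriv (Eq.symm ?_)
      rcases Nat.eq_zero_or_pos k with hk | hk
      · subst hk; norm_num
      · obtain ⟨m, hm⟩ : ∃ m, 2 * k = m + 1 := ⟨2 * k - 1, by omega⟩
        have hcast : ((m : ℂ) + 1) = 2 * (k : ℂ) := by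
          have := congrArg (Nat.cast (R := ℂ)) hm
          push_cast at this
          exact this.symm
        rw [hm]
        simp only [Nat.add_sub_cancel, pow_succ]
        push_cast
        rw [hcast]
        ring
    have hgne : dedekindEta w ^ (2 * k) ≠ 0 := pow_ne_zero _ (eta_ne_zero hw')
    have hdivd := hfd.div hgd hgne
    have h0 : (deriv f w * dedekindEta w ^ (2 * k) -
        f w * (2 * Real.pi * I * ((k : ℂ) / 12) * E₂ w * dedekindEta w ^ (2 * k))) /
        (dedekindEta w ^ (2 * k)) ^ 2 = 0 :=
      div_eq_zero_iff.mpr (Or.inl (by rw [hderiv]; ring))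
    exact h0 ▸ hdivd
  have hdiffOn : DifferentiableOn ℂ h {w : ℂ | 0 < w.im} :=
    fun w hw => ((key w hw).differentiableAt).differentiableWithinAt
  have hfw : ∀ w ∈ {w : ℂ | 0 < w.im}, fderivWithin ℂ h {w : ℂ | 0 < w.im} w = 0 := by
    intro w hw
    rw [fderivWithin_of_isOpen hU hw]
    have := (key w hw).hasFDerivAt.fderiv
    rw [this]
    ext x
    simp
  have hI : Complex.I ∈ {w : ℂ | 0 < w.im} := by simp [Complex.I_im]
  refine ⟨h Complex.I, fun z hz => ?_⟩
  have hc := (convex_halfSpace_im_gt 0).is_const_of_fderivWithin_eq_zero hdiffOn hfw hz hI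
  have hgne : dedekindEta z ^ (2 * k) ≠ 0 := pow_ne_zero _ (eta_ne_zero hz)
  rw [hh] at hc
  simp only at hc
  exact (div_eq_iff hgne).mp hc


end
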